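/- Let n ≥ 1 be an integer with n ≡ 5, 7, 11, 13, or 19 (mod 20) such that 6n+1 is prime. Then there is no splitting ℤ_{6n+1} = (M,S) with multiplier set M = {-1,1,2,3,4,5} and |S| = n. (Equivalently, the (5,1,n)-quasi-cross does not lattice tile ℝⁿ for such n.) -/

import Mathlib

/-- `(M, S)` is a splitting of `ℤ_q`: `M ⊆ ℤ \ {0}`, and the products `m·s`
(for `m ∈ M`, `s ∈ S`) are pairwise distinct and cover exactly the nonzero
elements of `ZMod q`. -/
def IsSplitting (q : ℕ) (M : Finset ℤ) (S : Finset (ZMod q)) : Prop :=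
  (0 : ℤ) ∉ M ∧
  Set.InjOn (fun p : ℤ × ZMod q => (p.1 : ZMod q) * p.2) ↑(M ×ˢ S) ∧
  (fun p : ℤ × ZMod q => (p.1 : ZMod q) * p.2) '' ↑(M ×ˢ S) = {a : ZMod q | a ≠ 0}

private instance fact5' : Fact (Nat.Prime 5) := ⟨by norm_num⟩

private lemma chi8_7 : ZMod.χ₈ (((7:ℕ)) : ZMod 8) = 1 := by decide
private lemma chi8_3 : ZMod.χ₈ (((3:ℕ)) : ZMod 8) = -1 := by decide
private lemma chi5_1 : quadraticChar (ZMod 5) (((1:ℕ)) : ZMod 5) = 1 := by decide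
private lemma chi5_2 : quadraticChar (ZMod 5) (((2:ℕ)) : ZMod 5) = -1 := by decide
private lemma chi5_3 : quadraticChar (ZMod 5) (((3:ℕ)) : ZMod 5) = -1 := by decide
private lemma chi5_4 : quadraticChar (ZMod 5) (((4:ℕ)) : ZMod 5) = 1 := by decide

theorem stmt_3 (n : ℕ) (hn : 1 ≤ n)
    (hmod : n % 20 = 5 ∨ n % 20 = 7 ∨ n % 20 = 11 ∨ n % 20 = 13 ∨ n % 20 = 19)
    (hp : Nat.Prime (6 * n + 1)) :
    ¬ ∃ S : Finset (ZMod (6 * n + 1)),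
        IsSplitting (6 * n + 1) ({-1, 1, 2, 3, 4, 5} : Finset ℤ) S ∧ S.card = n := by
  classical
  -- dispose of the case `n % 20 = 19`, where `5 ∣ 6n+1`
  have hmod' : n % 20 = 5 ∨ n % 20 = 7 ∨ n % 20 = 11 ∨ n % 20 = 13 := by
    rcases hmod with h | h | h | h | h
    · exact Or.inl h
    · exact Or.inr (Or.inl h)
    · exact Or.inr (Or.inr (Or.inl h))
    · exact Or.inr (Or.inr (Or.inr h))
    · exfalso
      have h5 : 5 ∣ 6 * n + 1 := by omega
      rcases hp.eq_one_or_self_of_dvd 5 h5 with h' | h' <;> omega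
  clear hmod
  rintro ⟨S, ⟨h0M, hinj, himg⟩, hcard⟩
  haveI hqp : Fact (Nat.Prime (6 * n + 1)) := ⟨hp⟩
  haveI : Fact (Nat.Prime 3) := ⟨by norm_num⟩
  haveI : Fact (Nat.Prime 5) := ⟨by norm_num⟩
  have hq4 : (6 * n + 1) % 4 = 3 := by omega
  have hF : ringChar (ZMod (6 * n + 1)) ≠ 2 := by
    rw [ZMod.ringChar_zmod_n]; omega
  set χ : MulChar (ZMod (6 * n + 1)) ℤ := quadraticChar (ZMod (6 * n + 1)) with hχ
  set M : Finset ℤ := ({-1, 1, 2, 3, 4, 5} : Finset ℤ) with hM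
  set f : ℤ × ZMod (6 * n + 1) → ZMod (6 * n + 1) :=
    fun p => (p.1 : ZMod (6 * n + 1)) * p.2 with hf
  -- the image as a Finset
  have himgF : (M ×ˢ S).image f = Finset.univ \ {0} := by
    apply Finset.coe_injective
    rw [Finset.coe_image, himg]
    ext a
    simp
  -- the total sum of χ over nonzero elements vanishes
  have hsum0 : ∑ p ∈ M ×ˢ S, χ (f p) = 0 := by
    have hinj' : ∀ x ∈ M ×ˢ S, ∀ y ∈ M ×ˢ S, f x = f y → x = y := by
      intro x hx y hy hxy
      exact hinj (Finset.mem_coe.mpr hx) (Finset.mem_coe.mpr hy) hxy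
    calc ∑ p ∈ M ×ˢ S, χ (f p) = ∑ a ∈ (M ×ˢ S).image f, χ a :=
          (Finset.sum_image hinj').symm
      _ = ∑ a ∈ Finset.univ \ {0}, χ a := by rw [himgF]
      _ = (∑ a : ZMod (6 * n + 1), χ a) - ∑ a ∈ ({0} : Finset (ZMod (6 * n + 1))), χ a :=
          Finset.sum_sdiff_eq_sub (Finset.subset_univ _)
      _ = 0 := by
          rw [quadraticChar_sum_zero hF, Finset.sum_singleton, hχ, quadraticChar_zero]
          norm_num
  -- factor the sum
  have hfactor : (∑ m ∈ M, χ ((m : ℤ) : ZMod (6 * n + 1))) * (∑ s ∈ S, χ s)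
      = ∑ p ∈ M ×ˢ S, χ (f p) := by
    rw [Finset.sum_product, Finset.sum_mul_sum]
    apply Finset.sum_congr rfl
    intro m _
    apply Finset.sum_congr rfl
    intro s _
    rw [hf]
    simp [map_mul]
  -- elements of S are nonzero
  have hS0 : ∀ s ∈ S, s ≠ 0 := by
    intro s hs
    have hmem : ((1 : ℤ), s) ∈ (↑(M ×ˢ S) : Set (ℤ × ZMod (6 * n + 1))) := by
      simp only [Finset.mem_coe, Finset.mem_product]
      exact ⟨by simp [hM], hs⟩
    have h2 := Set.mem_image_of_mem f hmem
    rw [himg] at h2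
    simpa [hf] using h2
  -- the S-sum is odd, hence nonzero
  have hSodd : (∑ s ∈ S, χ s) % 2 = 1 := by
    rw [Finset.sum_int_mod]
    have hone : ∀ s ∈ S, χ s % 2 = 1 := by
      intro s hs
      rcases quadraticChar_dichotomy (F := ZMod (6 * n + 1)) (hS0 s hs) with h | h <;>
        rw [hχ, h] <;> decide
    rw [Finset.sum_congr rfl hone, Finset.sum_const, nsmul_eq_mul, mul_one, hcard]
    have hn2 : n % 2 = 1 := by rcases hmod' with h | h | h | h <;> omega
    omega
  have hSne : (∑ s ∈ S, χ s) ≠ 0 := by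
    intro h; rw [h] at hSodd; norm_num at hSodd
  have hMsum : ∑ m ∈ M, χ ((m : ℤ) : ZMod (6 * n + 1)) = 0 := by
    rcases mul_eq_zero.mp (hfactor.trans hsum0) with h | h
    · exact h
    · exact absurd h hSne
  -- expand the M-sum
  have h2ne : (2 : ZMod (6 * n + 1)) ≠ 0 := by
    have h' : ((2 : ℕ) : ZMod (6 * n + 1)) ≠ 0 := by
      rw [Ne, ZMod.natCast_eq_zero_iff]
      intro hd
      have := Nat.le_of_dvd (by norm_num) hd
      omega
    simpa using h'
  have hexp : χ (-1) + χ 2 + χ 3 + χ 5 = -2 := by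
    have e : ∑ m ∈ M, χ ((m : ℤ) : ZMod (6 * n + 1))
        = χ (-1) + χ 1 + χ 2 + χ 3 + χ 4 + χ 5 := by
      rw [hM]
      rw [Finset.sum_insert (by decide), Finset.sum_insert (by decide),
        Finset.sum_insert (by decide), Finset.sum_insert (by decide),
        Finset.sum_insert (by decide), Finset.sum_singleton]
      push_cast
      ring
    rw [e] at hMsum
    have h1 : χ 1 = 1 := map_one χ
    have h4 : χ 4 = 1 := by
      rw [hχ, show (4 : ZMod (6 * n + 1)) = 2 ^ 2 by norm_num]
      exact quadraticChar_sq_one' h2ne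
    rw [h1, h4] at hMsum
    linarith
  -- χ(-1) = -1
  have hneg1 : χ (-1) = -1 := by
    rw [hχ, quadraticChar_neg_one hF, ZMod.card]
    exact ZMod.χ₄_nat_three_mod_four hq4
  -- χ(2) = χ₈ q
  have h2v : χ 2 = ZMod.χ₈ (((6 * n + 1) % 8 : ℕ) : ZMod 8) := by
    rw [hχ, quadraticChar_two hF, ZMod.card, ZMod.χ₈_nat_mod_eight]
  -- χ(3) = -1 by reciprocity
  have h3v : χ 3 = -1 := by
    have hr := legendreSym.quadratic_reciprocity_three_mod_four
      (p := 3) (q := 6 * n + 1) (by norm_num) hq4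
    have hl3 : legendreSym 3 ((6 * n + 1 : ℕ) : ℤ) = 1 := by
      have hcast : (((6 * n + 1 : ℕ) : ℤ) : ZMod 3) = 1 := by
        have e1 : (((6 * n + 1 : ℕ) : ℤ) : ZMod 3)
            = (((6 * n + 1) % 3 : ℕ) : ZMod 3) := by
          push_cast [ZMod.natCast_mod]
          ring
        rw [e1, show (6 * n + 1) % 3 = 1 by omega]
        norm_num
      rw [legendreSym, hcast]
      exact map_one _
    have h' : legendreSym (6 * n + 1) ((3 : ℕ) : ℤ) = -1 := by rw [hr, hl3]
    rw [legendreSym] at h'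
    rw [hχ]
    simpa using h'
  -- χ(5) = legendreSym 5 q
  have h5v : χ 5 = quadraticChar (ZMod 5) ((((6 * n + 1) % 5 : ℕ)) : ZMod 5) := by
    have hr := legendreSym.quadratic_reciprocity_one_mod_four
      (p := 5) (q := 6 * n + 1) (by norm_num) (by omega)
    rw [legendreSym, legendreSym] at hr
    have e1 : (((6 * n + 1 : ℕ) : ℤ) : ZMod 5) = (((6 * n + 1) % 5 : ℕ) : ZMod 5) := by
      push_cast [ZMod.natCast_mod]
      ring
    rw [e1] at hr
    rw [hχ]
    rw [← hr]
    norm_num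
  -- finish by cases
  rcases hmod' with h | h | h | h
  · have e2 : χ 2 = 1 := by
      rw [h2v, show (6 * n + 1) % 8 = 7 by omega]; exact chi8_7
    have e5 : χ 5 = 1 := by
      rw [h5v, show (6 * n + 1) % 5 = 1 by omega]; exact chi5_1
    rw [hneg1, e2, h3v, e5] at hexp; norm_num at hexp
  · have e2 : χ 2 = -1 := by
      rw [h2v, show (6 * n + 1) % 8 = 3 by omega]; exact chi8_3
    have e5 : χ 5 = -1 := by
      rw [h5v, show (6 * n + 1) % 5 = 3 by omega]; exact chi5_3
    rw [hneg1, e2, h3v, e5] at hexp; norm_num at hexp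
  · have e2 : χ 2 = -1 := by
      rw [h2v, show (6 * n + 1) % 8 = 3 by omega]; exact chi8_3
    have e5 : χ 5 = -1 := by
      rw [h5v, show (6 * n + 1) % 5 = 2 by omega]; exact chi5_2
    rw [hneg1, e2, h3v, e5] at hexp; norm_num at hexp
  · have e2 : χ 2 = 1 := by
      rw [h2v, show (6 * n + 1) % 8 = 7 by omega]; exact chi8_7
    have e5 : χ 5 = 1 := by
      rw [h5v, show (6 * n + 1) % 5 = 4 by omega]; exact chi5_4
    rw [hneg1, e2, h3v, e5] at hexp; norm_num at hexp
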